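/- Let H be a symmetric n×n matrix with H ⪯ U_H·I (U_H > 0), g ∈ ℝ^n with g ≠ 0, δ ≥ 0, and suppose [v; t] is a unit eigenvector of F = [[H, g], [gᵀ, -δ]] for its smallest eigenvalue -θ with θ > δ and t ≠ 0. If d = v/t satisfies ‖d‖ ≤ Δ for some Δ ≤ √2/2, then ‖g‖ ≤ 2(U_H + δ)Δ. -/

import Mathlib

open Matrix

/-- The homogenized matrix `F = [[H, g], [gᵀ, -δ]]`. -/
noncomputable def homog {n : ℕ} (H : Matrix (Fin n) (Fin n) ℝ) (g : Fin n → ℝ) (δ : ℝ) :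
    Matrix (Fin (n + 1)) (Fin (n + 1)) ℝ :=
  Matrix.of fun i j =>
    if hi : (i : ℕ) < n then
      if hj : (j : ℕ) < n then H ⟨i, hi⟩ ⟨j, hj⟩ else g ⟨i, hi⟩
    else if hj : (j : ℕ) < n then g ⟨j, hj⟩ else -δ

variable {n : ℕ} (H : Matrix (Fin n) (Fin n) ℝ) (g : Fin n → ℝ) (δ : ℝ)

lemma homog_cc (i j : Fin n) : homog H g δ i.castSucc j.castSucc = H i j := by
  simp [homog, i.isLt, j.isLt]

lemma homog_cl (i : Fin n) : homog H g δ i.castSucc (Fin.last n) = g i := by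
  simp [homog, i.isLt]

lemma homog_lc (j : Fin n) : homog H g δ (Fin.last n) j.castSucc = g j := by
  simp [homog, j.isLt]

lemma homog_ll : homog H g δ (Fin.last n) (Fin.last n) = -δ := by
  simp [homog]

lemma dot_snoc (a b : Fin n → ℝ) (s r : ℝ) :
    (Fin.snoc a s : Fin (n+1) → ℝ) ⬝ᵥ (Fin.snoc b r : Fin (n+1) → ℝ) = a ⬝ᵥ b + s * r := by
  simp [dotProduct, Fin.sum_univ_castSucc]

lemma homog_mulVec (b : Fin n → ℝ) (r : ℝ) :
    homog H g δ *ᵥ (Fin.snoc b r : Fin (n+1) → ℝ)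
      = Fin.snoc (H *ᵥ b + r • g) (g ⬝ᵥ b - δ * r) := by
  funext i
  refine Fin.lastCases ?_ (fun i => ?_) i
  · simp [Matrix.mulVec, dotProduct, Fin.sum_univ_castSucc, homog_lc, homog_ll,
      sub_eq_add_neg, mul_comm]
  · simp [Matrix.mulVec, dotProduct, Fin.sum_univ_castSucc, homog_cc, homog_cl,
      mul_comm]

lemma shift_posSemidef {m : ℕ} (F : Matrix (Fin m) (Fin m) ℝ) (hF : F.IsHermitian) (θ : ℝ)
    (h : ∀ i, 0 ≤ hF.eigenvalues i + θ) :
    (F + θ • (1 : Matrix (Fin m) (Fin m) ℝ)).PosSemidef := by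
  have hU : (hF.eigenvectorUnitary : Matrix (Fin m) (Fin m) ℝ)
      * star (hF.eigenvectorUnitary : Matrix (Fin m) (Fin m) ℝ) = 1 :=
    Matrix.mem_unitaryGroup_iff.mp hF.eigenvectorUnitary.2
  have key : F + θ • (1 : Matrix (Fin m) (Fin m) ℝ)
      = (hF.eigenvectorUnitary : Matrix (Fin m) (Fin m) ℝ)
        * Matrix.diagonal (fun i => hF.eigenvalues i + θ)
        * star (hF.eigenvectorUnitary : Matrix (Fin m) (Fin m) ℝ) := by
    have hdiag : Matrix.diagonal (fun i => hF.eigenvalues i + θ)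
        = Matrix.diagonal (RCLike.ofReal ∘ hF.eigenvalues)
          + θ • (1 : Matrix (Fin m) (Fin m) ℝ) := by
      rw [Matrix.smul_one_eq_diagonal, ← Matrix.diagonal_add]
      rfl
    rw [hdiag, Matrix.mul_add, Matrix.add_mul]
    congr 1
    · exact hF.spectral_theorem
    · rw [Matrix.mul_smul, Matrix.mul_one, Matrix.smul_mul, hU]
  rw [key]
  exact (Matrix.posSemidef_diagonal_iff.mpr h).mul_mul_conjTranspose_same _


set_option maxHeartbeats 1000000 in
/-- Small-step bound on the gradient norm: if the homogenized direction
`d = v / t` satisfies `‖d‖ ≤ Δ ≤ √2 / 2`, then `‖g‖ ≤ 2 (U_H + δ) Δ`. -/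
theorem small_step_gradient_bound {n : ℕ}
    (H : Matrix (Fin n) (Fin n) ℝ) (hH : H.IsHermitian)
    (U_H : ℝ) (hUHpos : 0 < U_H)
    (hUH : ∀ w : Fin n → ℝ, w ⬝ᵥ (H *ᵥ w) ≤ U_H * (w ⬝ᵥ w))
    (g : Fin n → ℝ) (hg : g ≠ 0) (δ θ Δ : ℝ) (hδ : 0 ≤ δ) (hθ : δ < θ)
    (hF : (homog H g δ).IsHermitian)
    (v : Fin n → ℝ) (t : ℝ) (ht : t ≠ 0)
    (hunit : Fin.snoc v t ⬝ᵥ Fin.snoc v t = 1)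
    (heig : homog H g δ *ᵥ Fin.snoc v t = (-θ) • (Fin.snoc v t : Fin (n + 1) → ℝ))
    (hmin : -θ = ⨅ i, hF.eigenvalues i)
    (hd : Real.sqrt ((t⁻¹ • v) ⬝ᵥ (t⁻¹ • v)) ≤ Δ)
    (hΔ : Δ ≤ Real.sqrt 2 / 2) :
    Real.sqrt (g ⬝ᵥ g) ≤ 2 * (U_H + δ) * Δ := by
  classical
  set d : Fin n → ℝ := t⁻¹ • v with hddef
  -- component equations from the eigenvector equation
  rw [homog_mulVec] at heig
  have hsnoc : ((-θ) • (Fin.snoc v t : Fin (n + 1) → ℝ))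
      = (Fin.snoc ((-θ) • v) ((-θ) * t) : Fin (n+1) → ℝ) := by
    funext i
    refine Fin.lastCases ?_ (fun i => ?_) i <;> simp
  rw [hsnoc] at heig
  have E1 : H *ᵥ v + t • g = (-θ) • v := by
    funext i
    simpa using congrFun heig i.castSucc
  have E2 : g ⬝ᵥ v - δ * t = (-θ) * t := by
    simpa using congrFun heig (Fin.last n)
  -- facts about d
  have hd1 : H *ᵥ d = (-θ) • d - g := by
    rw [hddef, Matrix.mulVec_smul]
    have : H *ᵥ v = (-θ) • v - t • g := by rw [← E1]; abel
    rw [this, smul_sub, smul_smul, smul_smul, smul_smul, mul_comm, ← smul_smul,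
      inv_mul_cancel₀ ht, one_smul]
  have hd2 : g ⬝ᵥ d = δ - θ := by
    have hv : g ⬝ᵥ v = (δ - θ) * t := by linarith [E2]
    rw [hddef, dotProduct_smul, hv, smul_eq_mul]
    field_simp
  -- positive semidefiniteness of H + θ I on ℝ^n via the homogenized matrix
  have hnn : ∀ i, 0 ≤ hF.eigenvalues i + θ := by
    intro i
    have : -θ ≤ hF.eigenvalues i := by
      rw [hmin]; exact ciInf_le (Finite.bddBelow_range _) i
    linarith
  have hFθ := shift_posSemidef (homog H g δ) hF θ hnn
  have hpsd : ∀ w : Fin n → ℝ, 0 ≤ w ⬝ᵥ (H *ᵥ w) + θ * (w ⬝ᵥ w) := by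
    intro w
    have h0 := hFθ.dotProduct_mulVec_nonneg (Fin.snoc w 0)
    rw [Matrix.add_mulVec, Matrix.smul_mulVec, Matrix.one_mulVec] at h0
    simp only [star_trivial, dotProduct_add, RCLike.re_to_real] at h0
    rw [homog_mulVec, dot_snoc] at h0
    have hsm : (Fin.snoc w 0 : Fin (n+1) → ℝ) ⬝ᵥ θ • (Fin.snoc w 0 : Fin (n+1) → ℝ)
        = θ * (w ⬝ᵥ w) := by
      rw [dotProduct_smul, dot_snoc]; simp [smul_eq_mul]
    rw [hsm] at h0
    simpa [dotProduct_add, dotProduct_smul] using h0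
  -- symmetry of H
  have entry : ∀ i j, H i j = H j i := by
    intro i j
    conv_lhs => rw [← hH.eq]
    simp [Matrix.conjTranspose_apply]
  have hsym : ∀ x y : Fin n → ℝ, x ⬝ᵥ (H *ᵥ y) = y ⬝ᵥ (H *ᵥ x) := by
    intro x y
    simp only [dotProduct, Matrix.mulVec, Finset.mul_sum]
    rw [Finset.sum_comm]
    refine Finset.sum_congr rfl fun i _ => Finset.sum_congr rfl fun j _ => ?_
    rw [entry j i]; ring
  -- scalar facts
  have f1 : g ⬝ᵥ (H *ᵥ d) = -θ * (δ - θ) - g ⬝ᵥ g := by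
    rw [hd1, dotProduct_sub, dotProduct_smul, hd2, smul_eq_mul]
  have f2 : d ⬝ᵥ (H *ᵥ d) = -θ * (d ⬝ᵥ d) - (δ - θ) := by
    rw [hd1]
    have : d ⬝ᵥ g = δ - θ := by rw [dotProduct_comm]; exact hd2
    simp [dotProduct_sub, dotProduct_smul, this]
  have f3 : d ⬝ᵥ (H *ᵥ g) = -θ * (δ - θ) - g ⬝ᵥ g := by rw [hsym d g, f1]
  -- quadratic in s
  have hquad : ∀ s : ℝ, 0 ≤ (θ - δ) * (s * s) + (-2 * (g ⬝ᵥ g)) * s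
      + (g ⬝ᵥ (H *ᵥ g) + θ * (g ⬝ᵥ g)) := by
    intro s
    have h := hpsd (g + s • d)
    simp only [Matrix.mulVec_add, Matrix.mulVec_smul, dotProduct_add,
      add_dotProduct, dotProduct_smul, smul_dotProduct,
      smul_eq_mul] at h
    rw [f1, f2, f3, hd2, dotProduct_comm d g, hd2] at h
    ring_nf at h ⊢
    linarith [h]
  have hdisc := discrim_le_zero hquad
  rw [discrim] at hdisc
  -- basic positivity
  have hgg : 0 < g ⬝ᵥ g := by
    have hgg0 : 0 ≤ g ⬝ᵥ g := Finset.sum_nonneg fun i _ => mul_self_nonneg (g i)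
    rcases lt_or_eq_of_le hgg0 with h | h
    · exact h
    · exact absurd (dotProduct_self_eq_zero.mp h.symm) hg
  have hQg : g ⬝ᵥ (H *ᵥ g) + θ * (g ⬝ᵥ g) ≤ (U_H + θ) * (g ⬝ᵥ g) := by
    have := hUH g; nlinarith
  have h1 : g ⬝ᵥ g ≤ (U_H + θ) * (θ - δ) := by
    nlinarith [hdisc, hQg, hgg, hθ]
  -- Cauchy–Schwarz: θ - δ ≤ √(g⬝g) * Δ
  set G := Real.sqrt (g ⬝ᵥ g) with hGdef
  have hG2 : G ^ 2 = g ⬝ᵥ g := Real.sq_sqrt hgg.le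
  have hGpos : 0 < G := Real.sqrt_pos.mpr hgg
  have hΔ0 : 0 ≤ Δ := le_trans (Real.sqrt_nonneg _) hd
  have hcs : (g ⬝ᵥ d) ^ 2 ≤ (g ⬝ᵥ g) * (d ⬝ᵥ d) := by
    have := Finset.sum_mul_sq_le_sq_mul_sq Finset.univ g d
    simpa [dotProduct, pow_two, Finset.mul_sum] using this
  have hdd : Real.sqrt (d ⬝ᵥ d) ≤ Δ := hd
  have h2 : θ - δ ≤ G * Δ := by
    have habs : θ - δ ≤ |g ⬝ᵥ d| := by
      rw [hd2]
      calc θ - δ = -(δ - θ) := by ring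
      _ ≤ |δ - θ| := neg_le_abs _
    have hsq : |g ⬝ᵥ d| ≤ G * Real.sqrt (d ⬝ᵥ d) := by
      have hgg0 : 0 ≤ g ⬝ᵥ g := Finset.sum_nonneg fun i _ => mul_self_nonneg (g i)
      rw [← Real.sqrt_mul hgg0]
      exact Real.abs_le_sqrt hcs
    have hGd : G * Real.sqrt (d ⬝ᵥ d) ≤ G * Δ :=
      mul_le_mul_of_nonneg_left hdd hGpos.le
    linarith
  have hΔ2 : Δ ^ 2 ≤ 1 / 2 := by
    nlinarith [hΔ, hΔ0, Real.sqrt_nonneg 2, Real.sq_sqrt (by norm_num : (0:ℝ) ≤ 2)]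
  -- final combination
  have h3 : G ^ 2 ≤ (U_H + δ + G * Δ) * (G * Δ) := by
    calc G ^ 2 = g ⬝ᵥ g := hG2
    _ ≤ (U_H + θ) * (θ - δ) := h1
    _ ≤ (U_H + δ + G * Δ) * (G * Δ) := by
        apply mul_le_mul (by linarith) h2 (by linarith) (by positivity)
  nlinarith [h3, hΔ2, hGpos, mul_pos hGpos hGpos, sq_nonneg G, mul_le_mul_of_nonneg_left hΔ2 (sq_nonneg G)]
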